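/- Suppose the columns of the Jacobian matrix $\partial f$ of a morphism $f = (f_0 : \cdots : f_n): \mathbb{P}^1 \to \mathbb{P}^n$ of degree $e$ satisfy a degree-two relation $a = (s^2, t^2, 0, \dots, 0)$, i.e., $s^2 \partial_j f_0 + t^2 \partial_j f_1 = 0$ for $j \in \{s,t\}$. Then $f_0 = 0$; in particular $f$ is degenerate. -/

import Mathlib

open MvPolynomial Finsupp


lemma X_mul_pderiv_monomial {K : Type*} [CommRing K] {σ : Type*} [DecidableEq σ]
    (i : σ) (d : σ →₀ ℕ) (a : K) :
    X i * pderiv i (monomial d a) = (d i) • monomial d a := by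
  rw [pderiv_monomial]
  rcases Nat.eq_zero_or_pos (d i) with h | h
  · simp [h]
  · rw [X, monomial_mul, one_mul,
      add_tsub_cancel_of_le (Finsupp.single_le_iff.mpr h), smul_monomial]
    ring_nf

lemma euler {K : Type*} [CommRing K] (e : ℕ) (p : MvPolynomial (Fin 2) K)
    (hp : p.IsHomogeneous e) :
    X 0 * pderiv 0 p + X 1 * pderiv 1 p = (e : ℕ) • p := by
  conv_lhs => rw [p.as_sum]
  rw [map_sum, map_sum, Finset.mul_sum, Finset.mul_sum, ← Finset.sum_add_distrib]
  conv_rhs => rw [p.as_sum, Finset.smul_sum]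
  refine Finset.sum_congr rfl fun d hd => ?_
  rw [_root_.X_mul_pderiv_monomial, _root_.X_mul_pderiv_monomial, ← add_smul]
  congr 1
  have := hp (MvPolynomial.mem_support_iff.mp hd)
  rw [← this]
  simp [Finsupp.weight_apply, Finsupp.sum_fintype, Fin.sum_univ_two]


/-- Lemma 4.4 (lem-line): if the Jacobian of `f` satisfies the degree-two relation
`(s², t², 0, …, 0)`, then `f₀ = 0`; in particular `f` is degenerate. -/
theorem stmt_10 {K : Type*} [Field K] [CharZero K] (n e : ℕ) (he : 1 ≤ e)
    (f : Fin (n + 1) → MvPolynomial (Fin 2) K)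
    (hf : ∀ i, (f i).IsHomogeneous e)
    (hs : X 0 ^ 2 * pderiv 0 (f 0) + X 1 ^ 2 * pderiv 0 (f 1) = 0)
    (ht : X 0 ^ 2 * pderiv 1 (f 0) + X 1 ^ 2 * pderiv 1 (f 1) = 0) :
    f 0 = 0 := by
  have e0 := euler e (f 0) (hf 0)
  have e1 := euler e (f 1) (hf 1)
  -- key relation: X0² f0 + X1² f1 = 0
  have key : (X 0 : MvPolynomial (Fin 2) K) ^ 2 * f 0 + X 1 ^ 2 * f 1 = 0 := by
    have h : (X 0 : MvPolynomial (Fin 2) K) * (X 0 ^ 2 * pderiv 0 (f 0) + X 1 ^ 2 * pderiv 0 (f 1))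
        + X 1 * (X 0 ^ 2 * pderiv 1 (f 0) + X 1 ^ 2 * pderiv 1 (f 1)) = 0 := by
      rw [hs, ht]; ring
    have h2 : (e : MvPolynomial (Fin 2) K) * (X 0 ^ 2 * f 0 + X 1 ^ 2 * f 1) = 0 := by
      have expand : (e : MvPolynomial (Fin 2) K) * (X 0 ^ 2 * f 0 + X 1 ^ 2 * f 1)
          = X 0 ^ 2 * (X 0 * pderiv 0 (f 0) + X 1 * pderiv 1 (f 0))
            + X 1 ^ 2 * (X 0 * pderiv 0 (f 1) + X 1 * pderiv 1 (f 1)) := by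
        rw [e0, e1, nsmul_eq_mul, nsmul_eq_mul]; ring
      rw [expand, ← h]; ring
    have hne : (e : MvPolynomial (Fin 2) K) ≠ 0 := by
      exact_mod_cast Nat.cast_ne_zero.mpr (by omega)
    exact (mul_eq_zero.mp h2).resolve_left hne
  -- differentiate key w.r.t. s
  have hd : (2 : MvPolynomial (Fin 2) K) * X 0 * f 0 = 0 := by
    have := congrArg (pderiv 0) key
    simp only [map_add, map_zero] at this
    rw [(pderiv 0).leibniz (X 0 ^ 2) (f 0), (pderiv 0).leibniz (X 1 ^ 2) (f 1),
      (pderiv 0).leibniz_pow, (pderiv 0).leibniz_pow, pderiv_X_self,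
      pderiv_X_of_ne (by decide)] at this
    have h3 : (2 : MvPolynomial (Fin 2) K) * X 0 * f 0
        + (X 0 ^ 2 * pderiv 0 (f 0) + X 1 ^ 2 * pderiv 0 (f 1)) = 0 := by
      rw [← this]
      simp only [smul_eq_mul, nsmul_eq_mul]
      push_cast
      ring
    rw [hs, add_zero] at h3
    exact h3
  have h2ne : (2 : MvPolynomial (Fin 2) K) * X 0 ≠ 0 := by
    apply mul_ne_zero
    · have : (C 2 : MvPolynomial (Fin 2) K) ≠ 0 := C_ne_zero.mpr two_ne_zero
      simpa using this
    · exact X_ne_zero 0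
  exact (mul_eq_zero.mp hd).resolve_left h2ne
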